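/- Let Z be the metric space of the Z-construction and suppose in addition that Y is compact. Then every surjective isometry g of (Z, d) maps Y onto Y and Y × ℝ onto Y × ℝ, and there exist a surjective isometry g_Y of (Y, d₁) and a surjective isometry g_ℝ of the Euclidean line ℝ such that g(y) = g_Y(y) for all y ∈ Y and g(y, r) = (g_Y(y), g_ℝ(r)) for all (y, r) ∈ Y × ℝ. -/

import Mathlib

/-- The distance of the Z-construction on the disjoint union `Y ⊕ (Y × ℝ)`. -/
noncomputable def zdist {Y : Type*} [MetricSpace Y] (R M : ℝ) :
    Y ⊕ Y × ℝ → Y ⊕ Y × ℝ → ℝ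
  | Sum.inl y₁, Sum.inl y₂ => dist y₁ y₂
  | Sum.inl y₁, Sum.inr q => dist y₁ q.1 + R
  | Sum.inr p, Sum.inl y₂ => dist p.1 y₂ + R
  | Sum.inr p, Sum.inr q => dist p.1 q.1 + min |p.2 - q.2| M

/-- A map of `ℝ` preserving the `M`-truncated distance preserves the distance. -/
lemma real_trunc_iso {M : ℝ} (hM : 0 < M) (f : ℝ → ℝ)
    (hf : ∀ a b : ℝ, min |f a - f b| M = min |a - b| M) :
    ∀ a b : ℝ, |f a - f b| = |a - b| := by
  have hloc : ∀ a b : ℝ, |a - b| < M → |f a - f b| = |a - b| := by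
    intro a b h
    have h1 := hf a b
    rw [min_eq_left h.le] at h1
    rcases min_cases |f a - f b| M with ⟨h2, _⟩ | ⟨h2, h3⟩
    · rw [h2] at h1; exact h1
    · rw [h2] at h1; linarith
  have hinj : Function.Injective f := by
    intro a b hab
    have h1 := hf a b
    rw [hab, sub_self, abs_zero, min_eq_left hM.le] at h1
    have h0 : |a - b| = 0 := by
      rcases min_cases |a - b| M with ⟨h2, _⟩ | ⟨h2, _⟩ <;> rw [h2] at h1 <;>
        linarith [abs_nonneg (a - b)]
    rwa [abs_eq_zero, sub_eq_zero] at h0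
  have hcont : Continuous f := by
    rw [Metric.continuous_iff]
    intro b ε hε
    refine ⟨min ε M, lt_min hε hM, fun a ha => ?_⟩
    rw [Real.dist_eq] at *
    rw [hloc a b (lt_of_lt_of_le ha (min_le_right _ _))]
    exact lt_of_lt_of_le ha (min_le_left _ _)
  have key : ∀ F : ℝ → ℝ, Monotone F → (∀ a b : ℝ, |a - b| < M → |F a - F b| = |a - b|) →
      ∀ a b : ℝ, a ≤ b → F b - F a = b - a := by
    intro F hmono hFloc
    have step : ∀ a b : ℝ, a ≤ b → b - a < M → F b - F a = b - a := by
      intro a b hab h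
      have h2 := hFloc b a (by rw [abs_sub_lt_iff]; constructor <;> linarith)
      rwa [abs_of_nonneg (sub_nonneg.2 (hmono hab)), abs_of_nonneg (by linarith)] at h2
    have main : ∀ n : ℕ, ∀ a b : ℝ, a ≤ b → b - a ≤ n * (M / 2) → F b - F a = b - a := by
      intro n
      induction n with
      | zero =>
        intro a b hab h
        simp only [Nat.cast_zero, zero_mul] at h
        have : b = a := le_antisymm (by linarith) hab
        simp [this]
      | succ n ih =>
        intro a b hab h
        by_cases hc : b - a < M
        · exact step a b hab hc
        · push_neg at hc
          push_cast at h
          have hM2 : a ≤ b - M / 2 := by linarith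
          have h1 := step (b - M / 2) b (by linarith) (by linarith)
          have h2 : F (b - M / 2) - F a = (b - M / 2) - a :=
            ih a (b - M / 2) hM2 (by linarith)
          linarith
    intro a b hab
    obtain ⟨n, hn⟩ := exists_nat_ge ((b - a) / (M / 2))
    rw [div_le_iff₀ (by linarith)] at hn
    exact main n a b hab hn
  have habs : ∀ (F : ℝ → ℝ), Monotone F → (∀ a b : ℝ, |a - b| < M → |F a - F b| = |a - b|) →
      ∀ a b : ℝ, |F a - F b| = |a - b| := by
    intro F hmono hFloc a b
    rcases le_total a b with h | h
    · rw [abs_sub_comm, abs_of_nonneg (sub_nonneg.2 (hmono h)), key F hmono hFloc a b h,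
        abs_sub_comm, abs_of_nonneg (by linarith)]
    · rw [abs_of_nonneg (sub_nonneg.2 (hmono h)), key F hmono hFloc b a h,
        abs_of_nonneg (by linarith)]
  rcases hcont.strictMono_of_inj hinj with hm | ha
  · exact habs f hm.monotone hloc
  · intro a b
    have hFm : Monotone (fun x => -(f x)) :=
      (fun x y hxy => neg_le_neg (ha.antitone hxy))
    have hFloc : ∀ a b : ℝ, |a - b| < M → |(fun x => -(f x)) a - (fun x => -(f x)) b| = |a - b| := by
      intro a b h
      simp only
      rw [show -(f a) - -(f b) = -(f a - f b) by ring, abs_neg]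
      exact hloc a b h
    have := habs (fun x => -(f x)) hFm hFloc a b
    rwa [show -(f a) - -(f b) = -(f a - f b) by ring, abs_neg] at this

/-- Any `zdist`-preserving map sends line points to line points. -/
lemma zaux_inr {Y : Type*} [MetricSpace Y] [CompactSpace Y]
    {R M : ℝ} (hM : 0 < M) (hR : 0 < R)
    (g : Y ⊕ Y × ℝ → Y ⊕ Y × ℝ)
    (hgiso : ∀ a b : Y ⊕ Y × ℝ, zdist R M (g a) (g b) = zdist R M a b)
    (p : Y × ℝ) : ∃ q, g (Sum.inr p) = Sum.inr q := by
  obtain ⟨y, t⟩ := p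
  cases hg0 : g (Sum.inr (y, t)) with
  | inr q => exact ⟨q, rfl⟩
  | inl y₀ =>
    exfalso
    have hdist : ∀ s s' : ℝ,
        zdist R M (g (Sum.inr (y, t + s))) (g (Sum.inr (y, t + s'))) = min |s - s'| M := by
      intro s s'
      rw [hgiso]
      have : t + s - (t + s') = s - s' := by ring
      simp [zdist, this]
    set A : Set ℝ := {s | ∃ y', g (Sum.inr (y, t + s)) = Sum.inl y'} with hA
    have hsame : ∀ s s' : ℝ, |s - s'| < min R M → s ∈ A → s' ∈ A := by
      rintro s s' hss ⟨y1, hy1⟩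
      rcases lt_min_iff.1 hss with ⟨hssR, hssM⟩
      cases hq : g (Sum.inr (y, t + s')) with
      | inl y2 => exact ⟨y2, hq⟩
      | inr q =>
        exfalso
        have h1 := hdist s s'
        rw [hy1, hq] at h1
        simp only [zdist] at h1
        rw [min_eq_left hssM.le] at h1
        linarith [dist_nonneg (x := y1) (y := q.1)]
    have hAopen : IsOpen A := by
      rw [Metric.isOpen_iff]
      intro s hs
      exact ⟨min R M, lt_min hR hM, fun s' hs' => hsame s s'
        (by rw [Metric.mem_ball, Real.dist_eq] at hs'; rwa [abs_sub_comm]) hs⟩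
    have hAcopen : IsOpen Aᶜ := by
      rw [Metric.isOpen_iff]
      intro s hs
      refine ⟨min R M, lt_min hR hM, fun s' hs' hmem => hs ?_⟩
      refine hsame s' s ?_ hmem
      rwa [Metric.mem_ball, Real.dist_eq] at hs'
    have hclopen : IsClopen A := ⟨isOpen_compl_iff.mp hAcopen, hAopen⟩
    have h0 : (0 : ℝ) ∈ A := ⟨y₀, by rwa [add_zero]⟩
    have hAuniv : A = Set.univ := by
      rcases isClopen_iff.mp hclopen with h | h
      · exact absurd (h ▸ h0) (Set.notMem_empty 0)
      · exact h
    have hmem : ∀ n : ℕ, ((n : ℝ) * M) ∈ A := fun n => hAuniv ▸ Set.mem_univ _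
    choose u hu using hmem
    have hsep : ∀ n m : ℕ, n ≠ m → dist (u n) (u m) = M := by
      intro n m hnm
      have h1 := hdist ((n : ℝ) * M) ((m : ℝ) * M)
      rw [hu n, hu m] at h1
      simp only [zdist] at h1
      have h2 : |(n : ℝ) * M - (m : ℝ) * M| = |(n : ℝ) - m| * M := by
        rw [show (n : ℝ) * M - (m : ℝ) * M = ((n : ℝ) - m) * M by ring, abs_mul,
          abs_of_nonneg hM.le]
      have h3 : (1 : ℝ) ≤ |(n : ℝ) - m| := by
        have h4 : (1 : ℤ) ≤ |(n : ℤ) - m| := Int.one_le_abs (sub_ne_zero.2 (by exact_mod_cast hnm))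
        calc (1 : ℝ) = ((1 : ℤ) : ℝ) := by norm_num
          _ ≤ ((|(n : ℤ) - m| : ℤ) : ℝ) := by exact_mod_cast h4
          _ = |(n : ℝ) - m| := by push_cast; ring_nf
      rw [h2, min_eq_right (by nlinarith)] at h1
      exact h1
    obtain ⟨a, -, φ, hφ, hconv⟩ := isCompact_univ.tendsto_subseq (fun n => Set.mem_univ (u n))
    rw [Metric.tendsto_atTop] at hconv
    obtain ⟨N, hN⟩ := hconv (M / 2) (by linarith)
    have h1 := hN N le_rfl
    have h2 := hN (N + 1) (Nat.le_succ N)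
    have hne : φ N ≠ φ (N + 1) := (hφ (Nat.lt_succ_self N)).ne
    have h3 := hsep (φ N) (φ (N + 1)) hne
    have h4 := dist_triangle (u (φ N)) a (u (φ (N + 1)))
    rw [Function.comp_apply] at h1 h2
    rw [dist_comm] at h2
    linarith [h3 ▸ h4]

/-- if `Y` is compact, then every surjective isometry `g` of
`(Z, d)` maps `Y` onto `Y` and `Y × ℝ` onto `Y × ℝ`, and there exist a surjective
isometry `g_Y` of `(Y, d₁)` and a surjective isometry `g_ℝ` of the Euclidean line
such that `g(y) = g_Y(y)` for all `y ∈ Y` and `g(y, r) = (g_Y(y), g_ℝ(r))` for all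
`(y, r) ∈ Y × ℝ`. -/
theorem zspace_isometry_structure {Y : Type*} [MetricSpace Y] [CompactSpace Y]
    (R M : ℝ) (hM : 0 < M) (hRM : M ≤ 2 * R)
    (g : Y ⊕ Y × ℝ → Y ⊕ Y × ℝ) (hgsurj : Function.Surjective g)
    (hgiso : ∀ a b : Y ⊕ Y × ℝ, zdist R M (g a) (g b) = zdist R M a b) :
    g '' Set.range (Sum.inl : Y → Y ⊕ Y × ℝ) = Set.range Sum.inl ∧
    g '' Set.range (Sum.inr : Y × ℝ → Y ⊕ Y × ℝ) = Set.range Sum.inr ∧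
    ∃ (gY : Y → Y) (gR : ℝ → ℝ),
      Function.Surjective gY ∧ (∀ a b : Y, dist (gY a) (gY b) = dist a b) ∧
      Function.Surjective gR ∧ (∀ a b : ℝ, dist (gR a) (gR b) = dist a b) ∧
      (∀ y : Y, g (Sum.inl y) = Sum.inl (gY y)) ∧
      (∀ (y : Y) (r : ℝ), g (Sum.inr (y, r)) = Sum.inr (gY y, gR r)) := by
  by_cases hY : Nonempty Y
  case neg =>
    haveI : IsEmpty Y := not_nonempty_iff.mp hY
    refine ⟨by simp [Set.range_eq_empty], by simp [Set.range_eq_empty], fun y => y, id,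
      fun b => isEmptyElim b, fun a => isEmptyElim a, Function.surjective_id,
      by simp, fun y => isEmptyElim y, fun y r => isEmptyElim y⟩
  have hR : 0 < R := by linarith
  -- g is injective
  have hzself : ∀ z : Y ⊕ Y × ℝ, zdist R M z z = 0 := by
    rintro (z | z) <;> simp [zdist, min_eq_left hM.le]
  have hzzero : ∀ a b : Y ⊕ Y × ℝ, zdist R M a b = 0 → a = b := by
    rintro (a | a) (b | b) h <;> simp only [zdist] at h
    · rw [dist_eq_zero] at h; rw [h]
    · exact absurd h (by exact ne_of_gt (by positivity))
    · exact absurd h (by exact ne_of_gt (by positivity))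
    · have hd : (0 : ℝ) ≤ dist a.1 b.1 := dist_nonneg
      have hm : (0 : ℝ) ≤ min |a.2 - b.2| M := le_min (abs_nonneg _) hM.le
      have h1 : dist a.1 b.1 = 0 := by linarith
      have h2 : min |a.2 - b.2| M = 0 := by linarith
      have h3 : |a.2 - b.2| = 0 := by
        rcases min_cases |a.2 - b.2| M with ⟨h4, _⟩ | ⟨h4, _⟩ <;> rw [h4] at h2 <;>
          first | exact h2 | linarith
      rw [dist_eq_zero] at h1
      rw [abs_eq_zero, sub_eq_zero] at h3
      rw [show a = (a.1, a.2) from rfl, show b = (b.1, b.2) from rfl, h1, h3]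
  have ginj : Function.Injective g := by
    intro a b hab
    have h := hgiso a b
    rw [hab, hzself (g b)] at h
    exact hzzero a b h.symm
  -- inverse of g
  set g' := Function.invFun g with hg'
  have hri : Function.RightInverse g' g := Function.rightInverse_invFun hgsurj
  have hli : Function.LeftInverse g' g := Function.leftInverse_invFun ginj
  have hg'iso : ∀ a b : Y ⊕ Y × ℝ, zdist R M (g' a) (g' b) = zdist R M a b := by
    intro a b
    have h := hgiso (g' a) (g' b)
    rw [hri a, hri b] at h
    exact h.symm
  -- classification of images
  have hinr : ∀ p : Y × ℝ, ∃ q, g (Sum.inr p) = Sum.inr q := zaux_inr hM hR g hgiso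
  have hinl : ∀ y : Y, ∃ y', g (Sum.inl y) = Sum.inl y' := by
    intro y
    cases hz : g (Sum.inl y) with
    | inl y' => exact ⟨y', rfl⟩
    | inr q =>
      exfalso
      obtain ⟨q', hq'⟩ := zaux_inr hM hR g' hg'iso q
      rw [← hz, hli (Sum.inl y)] at hq'
      exact Sum.inl_ne_inr hq'
  choose gY hgY using hinl
  choose ψ hψ using hinr
  -- gY is an isometry
  have hdistY : ∀ a b : Y, dist (gY a) (gY b) = dist a b := by
    intro a b
    have h := hgiso (Sum.inl a) (Sum.inl b)
    rw [hgY a, hgY b] at h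
    simpa [zdist] using h
  -- first coordinate of ψ
  have hψ1 : ∀ (y : Y) (r : ℝ), (ψ (y, r)).1 = gY y := by
    intro y r
    have h := hgiso (Sum.inl y) (Sum.inr (y, r))
    rw [hgY y, hψ (y, r)] at h
    simp only [zdist, dist_self, zero_add] at h
    have : dist (gY y) (ψ (y, r)).1 = 0 := by linarith
    rw [dist_eq_zero] at this
    exact this.symm
  -- second coordinate independent of y
  have hψ2 : ∀ (y y' : Y) (r : ℝ), (ψ (y, r)).2 = (ψ (y', r)).2 := by
    intro y y' r
    have h := hgiso (Sum.inr (y, r)) (Sum.inr (y', r))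
    rw [hψ (y, r), hψ (y', r)] at h
    simp only [zdist, hψ1, hdistY, sub_self, abs_zero, min_eq_left hM.le] at h
    have h1 : min |(ψ (y, r)).2 - (ψ (y', r)).2| M = 0 := by linarith
    have h2 : |(ψ (y, r)).2 - (ψ (y', r)).2| = 0 := by
      rcases min_cases |(ψ (y, r)).2 - (ψ (y', r)).2| M with ⟨h4, _⟩ | ⟨h4, _⟩ <;>
        rw [h4] at h1 <;> first | exact h1 | linarith
    rwa [abs_eq_zero, sub_eq_zero] at h2
  obtain ⟨y₀⟩ := hY
  set gR : ℝ → ℝ := fun r => (ψ (y₀, r)).2 with hgRdef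
  have hψeq : ∀ (y : Y) (r : ℝ), ψ (y, r) = (gY y, gR r) := by
    intro y r
    have := hψ2 y y₀ r
    exact Prod.ext (hψ1 y r) this
  -- gR preserves the truncated distance
  have hgRtrunc : ∀ a b : ℝ, min |gR a - gR b| M = min |a - b| M := by
    intro a b
    have h := hgiso (Sum.inr (y₀, a)) (Sum.inr (y₀, b))
    rw [hψ (y₀, a), hψ (y₀, b)] at h
    simp only [zdist, hψ1, hdistY, dist_self, zero_add] at h
    exact h
  have hgRiso : ∀ a b : ℝ, |gR a - gR b| = |a - b| := real_trunc_iso hM gR hgRtrunc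
  -- surjectivity of gY
  have hgYsurj : Function.Surjective gY := by
    intro b
    obtain ⟨z, hz⟩ := hgsurj (Sum.inl b)
    cases z with
    | inl y =>
      rw [hgY y] at hz
      exact ⟨y, (Sum.inl.injEq _ _ ▸ hz : gY y = b)⟩
    | inr p =>
      rw [hψ p] at hz
      exact absurd hz Sum.inr_ne_inl
  -- surjectivity of gR
  have hgRsurj : Function.Surjective gR := by
    intro r
    obtain ⟨z, hz⟩ := hgsurj (Sum.inr (gY y₀, r))
    cases z with
    | inl y =>
      rw [hgY y] at hz
      exact absurd hz Sum.inl_ne_inr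
    | inr p =>
      obtain ⟨y', s⟩ := p
      rw [hψ (y', s), hψeq y' s] at hz
      have := (Sum.inr.injEq _ _ ▸ hz : (gY y', gR s) = (gY y₀, r))
      exact ⟨s, (Prod.ext_iff.1 this).2⟩
  refine ⟨?_, ?_, gY, gR, hgYsurj, hdistY, hgRsurj, ?_, hgY, fun y r => by
    rw [hψ (y, r), hψeq y r]⟩
  · ext z
    constructor
    · rintro ⟨_, ⟨y, rfl⟩, rfl⟩
      exact ⟨gY y, (hgY y).symm⟩
    · rintro ⟨y', rfl⟩
      obtain ⟨y, rfl⟩ := hgYsurj y'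
      exact ⟨Sum.inl y, ⟨y, rfl⟩, (hgY y)⟩
  · ext z
    constructor
    · rintro ⟨_, ⟨p, rfl⟩, rfl⟩
      exact ⟨ψ p, (hψ p).symm⟩
    · rintro ⟨q, rfl⟩
      obtain ⟨z, hz⟩ := hgsurj (Sum.inr q)
      cases z with
      | inl y => rw [hgY y] at hz; exact absurd hz Sum.inl_ne_inr
      | inr p => exact ⟨Sum.inr p, ⟨p, rfl⟩, hz⟩
  · intro a b
    rw [Real.dist_eq, Real.dist_eq]
    exact hgRiso a b
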